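/- Let M(p) = Σ_{k∈𝐪} g_k p_k h_k be a linearly parameterized n1×n2 matrix. Then the generic rank of M, i.e., the maximum of rank M(p) over p ∈ ℝ^q, equals min over all subsets S ⊆ 𝐪 of (rank G_S + rank H_{𝐪−S}). -/

import Mathlib

open Matrix BigOperators

namespace StructCtrl

/-- A general linearly parameterized `n1 × n2` matrix `M(p) = ∑ k, p k • (g k * h k)`,
with columns `g k` and rows `h k`. -/
noncomputable def paramMat {q n1 n2 : ℕ} (g : Fin q → Fin n1 → ℝ) (h : Fin q → Fin n2 → ℝ)
    (p : Fin q → ℝ) : Matrix (Fin n1) (Fin n2) ℝ :=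
  Matrix.of fun i j => ∑ k : Fin q, p k * (g k i * h k j)

/-- Generic rank: the maximum over `p ∈ ℝ^q` of the rank of `M(p)`. -/
noncomputable def genericRank {q n1 n2 : ℕ} (g : Fin q → Fin n1 → ℝ)
    (h : Fin q → Fin n2 → ℝ) : ℕ :=
  ⨆ p : Fin q → ℝ, (paramMat g h p).rank

/-- `A(p)`: the `n × n` matrix of the first `n` columns of `[A(p) B(p)]`. -/
noncomputable def Amat {n m q : ℕ} (g : Fin q → Fin n → ℝ) (h : Fin q → Fin (n + m) → ℝ)
    (p : Fin q → ℝ) : Matrix (Fin n) (Fin n) ℝ :=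
  Matrix.of fun i j => paramMat g h p i (Fin.castAdd m j)

/-- `B(p)`: the `n × m` matrix of the last `m` columns of `[A(p) B(p)]`. -/
noncomputable def Bmat {n m q : ℕ} (g : Fin q → Fin n → ℝ) (h : Fin q → Fin (n + m) → ℝ)
    (p : Fin q → ℝ) : Matrix (Fin n) (Fin m) ℝ :=
  Matrix.of fun i j => paramMat g h p i (Fin.natAdd n j)

/-- Controllability matrix `[B  AB  …  A^{n-1}B]` (columns indexed by `Fin n × Fin m`). -/
noncomputable def ctrbMat {n m : ℕ} (A : Matrix (Fin n) (Fin n) ℝ)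
    (B : Matrix (Fin n) (Fin m) ℝ) : Matrix (Fin n) (Fin n × Fin m) ℝ :=
  Matrix.of fun i kj => (A ^ (kj.1 : ℕ) * B) i kj.2

/-- `(A, B)` is structurally controllable: for some parameter value the controllability
matrix has full rank `n`. -/
def StructurallyControllable {n m q : ℕ} (g : Fin q → Fin n → ℝ)
    (h : Fin q → Fin (n + m) → ℝ) : Prop :=
  ∃ p : Fin q → ℝ, (ctrbMat (Amat g h p) (Bmat g h p)).rank = n

/-- The binary assumption: all entries of every `g k` and every `h k` are `0` or `1`. -/
def BinaryAssumption {n m q : ℕ} (g : Fin q → Fin n → ℝ)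
    (h : Fin q → Fin (n + m) → ℝ) : Prop :=
  (∀ k i, g k i = 0 ∨ g k i = 1) ∧ (∀ k j, h k j = 0 ∨ h k j = 1)

/-- The unitary assumption: every `g k` and every `h k` is a standard unit vector, and the
pairs `(g k, h k)` are pairwise distinct. -/
def UnitaryAssumption {n m q : ℕ} (g : Fin q → Fin n → ℝ)
    (h : Fin q → Fin (n + m) → ℝ) : Prop :=
  (∀ k, ∃ i : Fin n, g k = Pi.single i 1) ∧
  (∀ k, ∃ j : Fin (n + m), h k = Pi.single j 1) ∧
  (∀ k k', k ≠ k' → (g k, h k) ≠ (g k', h k'))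

/-- `(A, B)` is reducible: some simultaneous permutation of the states puts the pair,
for all parameter values, in block-triangular form with a zero top-right `n1 × (n - n1)`
block of `A` and a zero top `n1 × m` block of `B`, where `1 ≤ n1 < n`. -/
def Reducible {n m q : ℕ} (g : Fin q → Fin n → ℝ) (h : Fin q → Fin (n + m) → ℝ) : Prop :=
  ∃ (σ : Equiv.Perm (Fin n)) (n1 : ℕ), 1 ≤ n1 ∧ n1 < n ∧ ∀ p : Fin q → ℝ,
    (∀ i j : Fin n, (i : ℕ) < n1 → n1 ≤ (j : ℕ) → Amat g h p (σ i) (σ j) = 0) ∧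
    (∀ i : Fin n, (i : ℕ) < n1 → ∀ jb : Fin m, Bmat g h p (σ i) jb = 0)

/-- `(A, B)` is irreducible. -/
def PairIrreducible {n m q : ℕ} (g : Fin q → Fin n → ℝ)
    (h : Fin q → Fin (n + m) → ℝ) : Prop :=
  ¬ Reducible g h

/-- Arc (of any color) of the graph `𝔾` of `(A, B)` from vertex `a` to vertex `b`:
`b` is a row-vertex `i` (one of the first `n` vertices) and the `(i, a)` entry of some
`g k * h k` is nonzero. -/
def HasArc {n m q : ℕ} (g : Fin q → Fin n → ℝ) (h : Fin q → Fin (n + m) → ℝ)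
    (a b : Fin (n + m)) : Prop :=
  ∃ (k : Fin q) (i : Fin n), b = Fin.castAdd m i ∧ g k i * h k a ≠ 0

/-- `𝔾` has a spanning forest rooted at the `m` input vertices `n+1, …, n+m`: every other
vertex is reachable from some input vertex by a directed path. -/
def HasSpanningForestAtInputs {n m q : ℕ} (g : Fin q → Fin n → ℝ)
    (h : Fin q → Fin (n + m) → ℝ) : Prop :=
  ∀ v : Fin (n + m), (¬ ∃ j : Fin m, Fin.natAdd n j = v) →
    ∃ j : Fin m, Relation.ReflTransGen (HasArc g h) (Fin.natAdd n j) v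

/-- A multi-colored subgraph of `𝔾`, encoded by the data of its `n` arcs: each of the
vertices `1, …, n` is the head of exactly one arc, with tail `t i` and color `c i`.
Injectivity of `t` and of `c` says no two arcs share a start vertex or a color (no two
share an end vertex by construction); such a spanning subgraph is exactly a disjoint union
of `m` directed path graphs (whose sources are the `m` input vertices) and directed cycle
graphs, with all arc colors distinct. -/
def IsMCS {n m q : ℕ} (g : Fin q → Fin n → ℝ) (h : Fin q → Fin (n + m) → ℝ)
    (t : Fin n → Fin (n + m)) (c : Fin n → Fin q) : Prop :=
  Function.Injective t ∧ Function.Injective c ∧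
    ∀ i : Fin n, g (c i) i * h (c i) (t i) ≠ 0

/-- A pure sink of the multi-colored subgraph with tail map `t`: a sink that is not a
source (i.e. has no outgoing arc, and is one of the first `n` vertices). -/
def IsPureSink {n m : ℕ} (t : Fin n → Fin (n + m)) (v : Fin (n + m)) : Prop :=
  (¬ ∃ i : Fin n, t i = v) ∧ ∃ i : Fin n, Fin.castAdd m i = v

/-- A pure source: a source (one of the last `m` vertices) that is not a sink. -/
def IsPureSource {n m : ℕ} (t : Fin n → Fin (n + m)) (v : Fin (n + m)) : Prop :=
  (∃ i : Fin n, t i = v) ∧ ∃ j : Fin m, Fin.natAdd n j = v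

/-- A matrimonial partition, encoded by a permutation `μ` that matches each pure sink with
a distinct pure source (the two-element cells are the pairs `{v, μ v}` for `v` a pure sink;
all other vertices lie in singleton cells). -/
def IsMatrimonial {n m : ℕ} (t : Fin n → Fin (n + m)) (μ : Equiv.Perm (Fin (n + m))) : Prop :=
  ∀ v, IsPureSink t v ↔ IsPureSource t (μ v)

/-- The successor map of the quotient of a multi-colored subgraph by a matrimonial
partition: each vertex with an outgoing arc is sent to the head of that arc, each pure
sink is welded to (sent to) its paired pure source, and isolated vertices stay put. -/
noncomputable def weldMap {n m : ℕ} (t : Fin n → Fin (n + m))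
    (μ : Equiv.Perm (Fin (n + m))) (v : Fin (n + m)) : Fin (n + m) :=
  if hv : ∃ i : Fin n, t i = v then Fin.castAdd m hv.choose
  else if ∃ i : Fin n, Fin.castAdd m i = v then μ v else v

/-- Number of orbits of a self-map of `Fin N`. -/
noncomputable def orbitCount {N : ℕ} (f : Fin N → Fin N) : ℕ :=
  (Set.range fun v => {w | ∃ a b : ℕ, f^[a] v = f^[b] w}).ncard

/-- Number of isolated vertices of a multi-colored subgraph (vertices that are both a
source and a sink). -/
noncomputable def isolatedCount {n m : ℕ} (t : Fin n → Fin (n + m)) : ℕ :=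
  {v : Fin (n + m) | (¬ ∃ i : Fin n, t i = v) ∧ ∃ j : Fin m, Fin.natAdd n j = v}.ncard

/-- The number of directed cycle graphs in the quotient of a multi-colored subgraph by a
matrimonial partition: every orbit of the weld map, except the (singleton) orbits of the
isolated vertices, yields exactly one cycle graph of the quotient. -/
noncomputable def quotCycleCount {n m : ℕ} (t : Fin n → Fin (n + m))
    (μ : Equiv.Perm (Fin (n + m))) : ℕ :=
  orbitCount (weldMap t μ) - isolatedCount t

/-- `𝔾` has an unbalanced similarity class of multi-colored subgraphs: for some
multi-colored subgraph `(t, c)` and some matrimonial partition `μ` for its class, the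
numbers of odd and of even multi-colored subgraphs in its similarity class (same sink set,
i.e. same `Set.range t`, and same color set `Set.range c`) differ. -/
def HasUnbalancedClass {n m q : ℕ} (g : Fin q → Fin n → ℝ)
    (h : Fin q → Fin (n + m) → ℝ) : Prop :=
  ∃ (t : Fin n → Fin (n + m)) (c : Fin n → Fin q) (μ : Equiv.Perm (Fin (n + m))),
    IsMCS g h t c ∧ IsMatrimonial t μ ∧
    {tc : (Fin n → Fin (n + m)) × (Fin n → Fin q) |
        IsMCS g h tc.1 tc.2 ∧ Set.range tc.1 = Set.range t ∧
        Set.range tc.2 = Set.range c ∧ Odd (quotCycleCount tc.1 μ)}.ncard ≠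
      {tc : (Fin n → Fin (n + m)) × (Fin n → Fin q) |
        IsMCS g h tc.1 tc.2 ∧ Set.range tc.1 = Set.range t ∧
        Set.range tc.2 = Set.range c ∧ Even (quotCycleCount tc.1 μ)}.ncard

/-- Arc set of the directed path graph whose vertices, in order, are the list `l`. -/
def pathArcs {V : Type*} (l : List V) : Set (V × V) :=
  {a | ∃ k : ℕ, l[k]? = some a.1 ∧ l[k + 1]? = some a.2}

/-- Arc set of the directed cycle graph whose vertices, in cyclic order, are the list `l`. -/
def cycleArcs {V : Type*} (l : List V) : Set (V × V) :=
  pathArcs l ∪ {a | ∃ x y, l.getLast? = some x ∧ l.head? = some y ∧ a = (x, y)}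

/-- A cactus graph with vertex set `W`, arc set `E` and root `r`: a trunk (a directed path
graph, possibly a single vertex, starting at `r`) together with any number of buds, each
bud being a directed cycle graph together with a stem arc from a vertex already in the
graph (on the trunk or on the cycle of another bud) to a vertex of the cycle. -/
inductive IsCactus {V : Type*} : Set V → Set (V × V) → V → Prop where
  | trunk (r : V) (l : List V) (hnd : l.Nodup) (hhead : l.head? = some r) :
      IsCactus {v | v ∈ l} (pathArcs l) r
  | bud (r : V) (W : Set V) (E : Set (V × V)) (l : List V) (w u : V)
      (hc : IsCactus W E r) (hnd : l.Nodup) (hne : l ≠ [])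
      (hdisj : ∀ v ∈ l, v ∉ W) (hw : w ∈ W) (hu : u ∈ l) :
      IsCactus (W ∪ {v | v ∈ l}) (E ∪ cycleArcs l ∪ {(w, u)}) r

/-- `𝔾` has a spanning subgraph which is a disjoint union of `m` cactus graphs rooted at
the `m` input vertices `n+1, …, n+m`, respectively. -/
def HasSpanningCacti {n m q : ℕ} (g : Fin q → Fin n → ℝ)
    (h : Fin q → Fin (n + m) → ℝ) : Prop :=
  ∃ (W : Fin m → Set (Fin (n + m))) (F : Fin m → Set (Fin (n + m) × Fin (n + m))),
    (∀ j, IsCactus (W j) (F j) (Fin.natAdd n j)) ∧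
    (∀ j, ∀ a ∈ F j, HasArc g h a.1 a.2) ∧
    Pairwise (fun j j' => Disjoint (W j) (W j')) ∧
    (⋃ j, W j) = Set.univ

/-- Rank of the submatrix `G_S` whose columns are the `g i`, `i ∈ S`. -/
noncomputable def rankCols {q n1 : ℕ} (g : Fin q → Fin n1 → ℝ) (S : Finset (Fin q)) : ℕ :=
  (Matrix.of fun (i : Fin n1) (k : {x // x ∈ S}) => g k.1 i).rank

/-- Rank of the submatrix `H_S` whose rows are the `h i`, `i ∈ S`. -/
noncomputable def rankRows {q n2 : ℕ} (h : Fin q → Fin n2 → ℝ) (S : Finset (Fin q)) : ℕ :=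
  (Matrix.of fun (k : {x // x ∈ S}) (j : Fin n2) => h k.1 j).rank

/-- `I` is a jointly independent index set of `(G, H)`: both `{g i : i ∈ I}` and
`{h i : i ∈ I}` are linearly independent families. -/
def JointlyIndependent {q n1 n2 : ℕ} (g : Fin q → Fin n1 → ℝ) (h : Fin q → Fin n2 → ℝ)
    (I : Finset (Fin q)) : Prop :=
  LinearIndependent ℝ (fun i : {x // x ∈ I} => g i.1) ∧
  LinearIndependent ℝ (fun i : {x // x ∈ I} => h i.1)

/-- Maximum cardinality of a nonempty jointly independent index set of `(G, H)`,
taken to be `0` if none exists. -/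
noncomputable def maxJointIndep {q n1 n2 : ℕ} (g : Fin q → Fin n1 → ℝ)
    (h : Fin q → Fin n2 → ℝ) : ℕ :=
  sSup (insert 0 {c : ℕ | ∃ I : Finset (Fin q), I.Nonempty ∧
    JointlyIndependent g h I ∧ I.card = c})

/-- Arcs of the transfer graph of `{G_𝐪, H_𝐪}`; vertex `0` is `none`, vertex `i ∈ 𝐪`
is `some i`.  There is an arc from `0` to `i` iff `h_{i2} ≠ 0`, and an arc from `j` to `i`
iff the scalar `h_{i1} g_j` is nonzero. -/
def TArc {n m q : ℕ} (g : Fin q → Fin n → ℝ) (h : Fin q → Fin (n + m) → ℝ) :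
    Option (Fin q) → Option (Fin q) → Prop
  | none, some i => ∃ j : Fin m, h i (Fin.natAdd n j) ≠ 0
  | some j, some i => (∑ l : Fin n, h i (Fin.castAdd m l) * g j l) ≠ 0
  | _, none => False

/-- The transfer graph has a spanning tree rooted at vertex `0`: every vertex `1, …, q`
is reachable from vertex `0` by a directed path. -/
def TransferRootedAtZero {n m q : ℕ} (g : Fin q → Fin n → ℝ)
    (h : Fin q → Fin (n + m) → ℝ) : Prop :=
  ∀ i : Fin q, Relation.ReflTransGen (TArc g h) none (some i)



section Aux
open Finset Submodule Module


variable {α : Type*} [DecidableEq α]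

lemma loopset_zero (f : Finset α → ℕ) (h0 : f ∅ = 0)
    (hsub : ∀ A B : Finset α, f (A ∪ B) + f (A ∩ B) ≤ f A + f B) :
    ∀ S : Finset α, (∀ e ∈ S, f {e} = 0) → f S = 0 := by
  intro S
  induction S using Finset.induction_on with
  | empty => intro _; exact h0
  | @insert e S _ ih =>
    intro hS
    have h1 := hsub {e} S
    have h2 : f S = 0 := ih fun x hx => hS x (Finset.mem_insert_of_mem hx)
    have h3 : f {e} = 0 := hS e (Finset.mem_insert_self e S)
    rw [Finset.insert_eq]
    omega

lemma matInt : ∀ (N : ℕ) (f1 f2 : Finset α → ℕ),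
    f1 ∅ = 0 → f2 ∅ = 0 →
    (∀ A B : Finset α, A ⊆ B → f1 A ≤ f1 B) → (∀ A B : Finset α, A ⊆ B → f2 A ≤ f2 B) →
    (∀ A B : Finset α, f1 (A ∪ B) + f1 (A ∩ B) ≤ f1 A + f1 B) →
    (∀ A B : Finset α, f2 (A ∪ B) + f2 (A ∩ B) ≤ f2 A + f2 B) →
    (∀ (e : α) (A : Finset α), f1 (insert e A) ≤ f1 A + 1) →
    (∀ (e : α) (A : Finset α), f2 (insert e A) ≤ f2 A + 1) →
    ∀ E : Finset α, E.card ≤ N →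
    ∃ I S : Finset α, I ⊆ E ∧ S ⊆ E ∧ f1 I = I.card ∧ f2 I = I.card ∧
      f1 S + f2 (E \ S) ≤ I.card := by
  intro N
  induction N with
  | zero =>
    intro f1 f2 h10 h20 _ _ _ _ _ _ E hE
    have : E = ∅ := Finset.card_eq_zero.mp (Nat.le_zero.mp hE)
    subst this
    exact ⟨∅, ∅, Finset.Subset.refl _, Finset.Subset.refl _, by simp [h10], by simp [h20],
      by simp [h10, h20]⟩
  | succ N ih =>
    intro f1 f2 h10 h20 h1m h2m h1s h2s h1u h2u E hE
    by_cases hcase : ∃ e ∈ E, 1 ≤ f1 {e} ∧ 1 ≤ f2 {e}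
    · obtain ⟨e, heE, h1e, h2e⟩ := hcase
      have f1e : f1 {e} = 1 := by
        have := h1u e ∅; rw [Finset.insert_empty, h10] at this; omega
      have f2e : f2 {e} = 1 := by
        have := h2u e ∅; rw [Finset.insert_empty, h20] at this; omega
      have hE'card : (E.erase e).card ≤ N := by
        have h1 := Finset.card_erase_of_mem heE
        have hpos : 1 ≤ E.card := Finset.card_pos.mpr ⟨e, heE⟩
        omega
      have g1 : ∀ A : Finset α, 1 ≤ f1 (insert e A) := fun A => by
        have := h1m {e} (insert e A) (by simp)
        omega
      have g2 : ∀ A : Finset α, 1 ≤ f2 (insert e A) := fun A => by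
        have := h2m {e} (insert e A) (by simp)
        omega
      -- deletion
      obtain ⟨I1, S1, hI1E, hS1E, hI1f1, hI1f2, hbound1⟩ :=
        ih f1 f2 h10 h20 h1m h2m h1s h2s h1u h2u (E.erase e) hE'card
      -- contraction
      have ins_union : ∀ A B : Finset α, insert e (A ∪ B) = insert e A ∪ insert e B := by
        intro A B; ext x
        simp only [Finset.mem_insert, Finset.mem_union]; tauto
      have ins_inter : ∀ A B : Finset α, insert e (A ∩ B) = insert e A ∩ insert e B := by
        intro A B; ext x
        simp only [Finset.mem_insert, Finset.mem_inter]; tauto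
      obtain ⟨I2, S2, hI2E, hS2E, hI2f1, hI2f2, hbound2⟩ :=
        ih (fun A => f1 (insert e A) - 1) (fun A => f2 (insert e A) - 1)
          (by simp only [Finset.insert_empty, f1e])
          (by simp only [Finset.insert_empty, f2e])
          (fun A B hAB => Nat.sub_le_sub_right (h1m _ _ (Finset.insert_subset_insert _ hAB)) 1)
          (fun A B hAB => Nat.sub_le_sub_right (h2m _ _ (Finset.insert_subset_insert _ hAB)) 1)
          (fun A B => by
            have hsub := h1s (insert e A) (insert e B)
            rw [← ins_union, ← ins_inter] at hsub
            have h1 := g1 A; have h2 := g1 B; have h3 := g1 (A ∪ B); have h4 := g1 (A ∩ B)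

            beta_reduce
            omega)
          (fun A B => by
            have hsub := h2s (insert e A) (insert e B)
            rw [← ins_union, ← ins_inter] at hsub
            have h1 := g2 A; have h2 := g2 B; have h3 := g2 (A ∪ B); have h4 := g2 (A ∩ B)

            beta_reduce
            omega)
          (fun a A => by
            have hu := h1u a (insert e A)
            rw [Finset.insert_comm] at hu
            have h1 := g1 A; have h2 := g1 (insert a A)

            beta_reduce
            omega)
          (fun a A => by
            have hu := h2u a (insert e A)
            rw [Finset.insert_comm] at hu
            have h1 := g2 A; have h2 := g2 (insert a A)

            beta_reduce
            omega)
          (E.erase e) hE'card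
      have heI2 : e ∉ I2 := fun hmem => Finset.notMem_erase e E (hI2E hmem)
      have heS1 : e ∉ S1 := fun hmem => Finset.notMem_erase e E (hS1E hmem)
      have heS2 : e ∉ S2 := fun hmem => Finset.notMem_erase e E (hS2E hmem)
      have hI2card : (insert e I2).card = I2.card + 1 := Finset.card_insert_of_notMem heI2
      have hIf1 : f1 (insert e I2) = I2.card + 1 := by have := g1 I2; omega
      have hIf2 : f2 (insert e I2) = I2.card + 1 := by have := g2 I2; omega
      have hB : f1 (insert e S2) + f2 (insert e (E.erase e \ S2)) ≤ I2.card + 2 := by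
        have h1 := g1 S2; have h2 := g2 (E.erase e \ S2)
        omega
      -- submodularity combination
      have hs1 := h1s S1 (insert e S2)
      have hs2 := h2s (E.erase e \ S1) (insert e (E.erase e \ S2))
      have id1 : (E.erase e \ S1) ∪ insert e (E.erase e \ S2) = E \ (S1 ∩ insert e S2) := by
        ext x
        simp only [Finset.mem_union, Finset.mem_sdiff, Finset.mem_erase,
          Finset.mem_insert, Finset.mem_inter]
        by_cases hx : x = e
        · subst hx; simp [heE, heS1]
        · simp [hx]; tauto
      have id2 : (E.erase e \ S1) ∩ insert e (E.erase e \ S2) = E \ (S1 ∪ insert e S2) := by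
        ext x
        simp only [Finset.mem_union, Finset.mem_sdiff, Finset.mem_erase,
          Finset.mem_inter, Finset.mem_insert]
        by_cases hx : x = e
        · subst hx; simp
        · simp [hx]; tauto
      rw [id1, id2] at hs2
      have hSbE : S1 ∪ insert e S2 ⊆ E := by
        apply Finset.union_subset (hS1E.trans (Finset.erase_subset e E))
        exact Finset.insert_subset heE (hS2E.trans (Finset.erase_subset e E))
      have hSsE : S1 ∩ insert e S2 ⊆ E := fun x hx =>
        (hS1E.trans (Finset.erase_subset e E)) (Finset.mem_inter.mp hx).1
      have hIE : insert e I2 ⊆ E := Finset.insert_subset heE (hI2E.trans (Finset.erase_subset e E))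
      have hI1E' : I1 ⊆ E := hI1E.trans (Finset.erase_subset e E)
      rcases le_total (I2.card + 1) I1.card with hab | hab
      · rcases le_total (f1 (S1 ∪ insert e S2) + f2 (E \ (S1 ∪ insert e S2)))
            (f1 (S1 ∩ insert e S2) + f2 (E \ (S1 ∩ insert e S2))) with hv | hv
        · exact ⟨I1, S1 ∪ insert e S2, hI1E', hSbE, hI1f1, hI1f2, by omega⟩
        · exact ⟨I1, S1 ∩ insert e S2, hI1E', hSsE, hI1f1, hI1f2, by omega⟩
      · rcases le_total (f1 (S1 ∪ insert e S2) + f2 (E \ (S1 ∪ insert e S2)))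
            (f1 (S1 ∩ insert e S2) + f2 (E \ (S1 ∩ insert e S2))) with hv | hv
        · exact ⟨insert e I2, S1 ∪ insert e S2, hIE, hSbE, by omega, by omega, by omega⟩
        · exact ⟨insert e I2, S1 ∩ insert e S2, hIE, hSsE, by omega, by omega, by omega⟩
    · push_neg at hcase
      refine ⟨∅, E.filter (fun e => f1 {e} = 0), Finset.empty_subset _, Finset.filter_subset _ _,
        by simp [h10], by simp [h20], ?_⟩
      have hfS : f1 (E.filter (fun e => f1 {e} = 0)) = 0 :=
        loopset_zero f1 h10 h1s _ (fun x hx => (Finset.mem_filter.mp hx).2)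
      have hfT : f2 (E \ E.filter (fun e => f1 {e} = 0)) = 0 := by
        apply loopset_zero f2 h20 h2s
        intro x hx
        rw [Finset.mem_sdiff, Finset.mem_filter] at hx
        have h1 : ¬ f1 {x} = 0 := fun hc => hx.2 ⟨hx.1, hc⟩
        have h2 := hcase x hx.1 (by omega)
        omega
      simp [hfS, hfT]



variable {q n n1 n2 : ℕ}

noncomputable def spanRk (f : Fin q → Fin n → ℝ) (S : Finset (Fin q)) : ℕ :=
  Module.finrank ℝ (Submodule.span ℝ (f '' ↑S) : Submodule ℝ (Fin n → ℝ))

lemma spanRk_empty (f : Fin q → Fin n → ℝ) : spanRk f ∅ = 0 := by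
  simp [spanRk]

lemma spanRk_mono (f : Fin q → Fin n → ℝ) {A B : Finset (Fin q)} (hAB : A ⊆ B) :
    spanRk f A ≤ spanRk f B :=
  Submodule.finrank_mono (span_mono (Set.image_mono hAB))

lemma spanRk_submod (f : Fin q → Fin n → ℝ) (A B : Finset (Fin q)) :
    spanRk f (A ∪ B) + spanRk f (A ∩ B) ≤ spanRk f A + spanRk f B := by
  have him : (f '' ↑(A ∪ B) : Set (Fin n → ℝ)) = f '' ↑A ∪ f '' ↑B := by
    rw [Finset.coe_union, Set.image_union]
  have h1 : spanRk f (A ∪ B) = finrank ℝ ↥(span ℝ (f '' ↑A) ⊔ span ℝ (f '' ↑B)) := by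
    rw [spanRk, him, Submodule.span_union]
  have h2 : spanRk f (A ∩ B) ≤ finrank ℝ ↥(span ℝ (f '' ↑A) ⊓ span ℝ (f '' ↑B)) := by
    apply Submodule.finrank_mono
    apply le_inf
    · exact span_mono (Set.image_mono (by simp [Finset.inter_subset_left]))
    · exact span_mono (Set.image_mono (by simp [Finset.inter_subset_right]))
  have h3 := Submodule.finrank_sup_add_finrank_inf_eq (span ℝ (f '' ↑A)) (span ℝ (f '' ↑B))
  have h4 : spanRk f A = finrank ℝ ↥(span ℝ (f '' ↑A)) := rfl
  have h5 : spanRk f B = finrank ℝ ↥(span ℝ (f '' ↑B)) := rfl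
  omega

lemma spanRk_insert_le (f : Fin q → Fin n → ℝ) (e : Fin q) (A : Finset (Fin q)) :
    spanRk f (insert e A) ≤ spanRk f A + 1 := by
  have him : (f '' ↑(insert e A) : Set (Fin n → ℝ)) = insert (f e) (f '' ↑A) := by
    rw [Finset.coe_insert, Set.image_insert_eq]
  rw [spanRk, him, Submodule.span_insert]
  have h3 := Submodule.finrank_sup_add_finrank_inf_eq (ℝ ∙ (f e)) (span ℝ (f '' ↑A))
  have h4 : finrank ℝ ↥(ℝ ∙ (f e)) ≤ 1 := by
    rcases eq_or_ne (f e) 0 with h | h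
    · rw [h, Submodule.span_zero_singleton]
      simp
    · rw [finrank_span_singleton h]
  have h5 : spanRk f A = finrank ℝ ↥(span ℝ (f '' ↑A)) := rfl
  omega


lemma range_eq_image {q : ℕ} {β : Type*} (f : Fin q → β) (S : Finset (Fin q)) :
    (Set.range fun k : {x // x ∈ S} => f k.1) = f '' ↑S := by
  ext v; simp

lemma rankCols_eq_spanRk (g : Fin q → Fin n1 → ℝ) (S : Finset (Fin q)) :
    rankCols g S = spanRk g S := by
  rw [rankCols, Matrix.rank_eq_finrank_span_cols, spanRk]
  have h2 : Set.range (Matrix.of fun (i : Fin n1) (k : {x // x ∈ S}) => g k.1 i)ᵀ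
      = g '' ↑S := by
    rw [show ((Matrix.of fun (i : Fin n1) (k : {x // x ∈ S}) => g k.1 i)ᵀ)
        = fun (k : {x // x ∈ S}) => g k.1 from rfl]
    exact range_eq_image g S
  change finrank ℝ ↥(span ℝ (Set.range (Matrix.of fun (i : Fin n1) (k : {x // x ∈ S}) => g k.1 i)ᵀ)) = _
  rw [h2]

lemma rankRows_eq_spanRk (h : Fin q → Fin n2 → ℝ) (S : Finset (Fin q)) :
    rankRows h S = spanRk h S := by
  rw [rankRows, Matrix.rank_eq_finrank_span_row, spanRk]
  have h2 : Set.range (Matrix.of fun (k : {x // x ∈ S}) (j : Fin n2) => h k.1 j)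
      = h '' ↑S := by
    rw [show (Matrix.of fun (k : {x // x ∈ S}) (j : Fin n2) => h k.1 j)
        = fun (k : {x // x ∈ S}) => h k.1 from rfl]
    exact range_eq_image h S
  change finrank ℝ ↥(span ℝ (Set.range (Matrix.of fun (k : {x // x ∈ S}) (j : Fin n2) => h k.1 j))) = _
  rw [h2]

lemma paramMat_indicator (g : Fin q → Fin n1 → ℝ) (h : Fin q → Fin n2 → ℝ)
    (I : Finset (Fin q)) :
    paramMat g h (fun k => if k ∈ I then 1 else 0) =
      (Matrix.of fun (i : Fin n1) (k : {x // x ∈ I}) => g k.1 i) *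
      (Matrix.of fun (k : {x // x ∈ I}) (j : Fin n2) => h k.1 j) := by
  ext i j
  rw [Matrix.mul_apply]
  show ∑ k : Fin q, (if k ∈ I then (1:ℝ) else 0) * (g k i * h k j)
      = ∑ k : {x // x ∈ I}, g k.1 i * h k.1 j
  rw [Finset.sum_coe_sort I (fun k => g k i * h k j)]
  have hterm : ∀ k : Fin q, (if k ∈ I then (1:ℝ) else 0) * (g k i * h k j)
      = if k ∈ I then g k i * h k j else 0 := by intro k; split <;> simp
  rw [Finset.sum_congr rfl (fun k _ => hterm k), Finset.sum_ite_mem, Finset.univ_inter]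

lemma rank_paramMat_indicator (g : Fin q → Fin n1 → ℝ) (h : Fin q → Fin n2 → ℝ)
    (I : Finset (Fin q)) (hg : rankCols g I = I.card) (hh : rankRows h I = I.card) :
    (paramMat g h (fun k => if k ∈ I then 1 else 0)).rank = I.card := by
  rw [paramMat_indicator]
  have hHsurj : LinearMap.range
      (Matrix.of fun (k : {x // x ∈ I}) (j : Fin n2) => h k.1 j).mulVecLin = ⊤ := by
    apply Submodule.eq_top_of_finrank_eq
    rw [show Module.finrank ℝ (LinearMap.range
        (Matrix.of fun (k : {x // x ∈ I}) (j : Fin n2) => h k.1 j).mulVecLin)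
      = rankRows h I from rfl, hh, Module.finrank_pi, Fintype.card_coe]
  rw [Matrix.rank, Matrix.mulVecLin_mul, LinearMap.range_comp_of_range_eq_top _ hHsurj]
  exact hg

lemma matrix_rank_add_le {m n : Type*} [Fintype n] (A B : Matrix m n ℝ) :
    (A + B).rank ≤ A.rank + B.rank := by
  rw [Matrix.rank, Matrix.rank, Matrix.rank, Matrix.mulVecLin_add]
  have h1 : LinearMap.range (A.mulVecLin + B.mulVecLin)
      ≤ LinearMap.range A.mulVecLin ⊔ LinearMap.range B.mulVecLin := by
    rintro x ⟨v, rfl⟩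
    exact Submodule.mem_sup.mpr ⟨A.mulVecLin v, ⟨v, rfl⟩, B.mulVecLin v, ⟨v, rfl⟩, rfl⟩
  refine (Submodule.finrank_mono h1).trans ?_
  have h2 := Submodule.finrank_sup_add_finrank_inf_eq
    (LinearMap.range A.mulVecLin) (LinearMap.range B.mulVecLin)
  omega

lemma rank_paramMat_le (g : Fin q → Fin n1 → ℝ) (h : Fin q → Fin n2 → ℝ)
    (p : Fin q → ℝ) (S : Finset (Fin q)) :
    (paramMat g h p).rank ≤ rankCols g S + rankRows h Sᶜ := by
  have hdecomp : paramMat g h p =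
      (Matrix.of fun (i : Fin n1) (k : {x // x ∈ S}) => g k.1 i) *
        (Matrix.of fun (k : {x // x ∈ S}) (j : Fin n2) => p k.1 * h k.1 j)
      + (Matrix.of fun (i : Fin n1) (k : {x // x ∈ Sᶜ}) => p k.1 * g k.1 i) *
        (Matrix.of fun (k : {x // x ∈ Sᶜ}) (j : Fin n2) => h k.1 j) := by
    ext i j
    rw [Matrix.add_apply, Matrix.mul_apply, Matrix.mul_apply]
    show ∑ k : Fin q, p k * (g k i * h k j)
        = (∑ k : {x // x ∈ S}, g k.1 i * (p k.1 * h k.1 j))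
          + ∑ k : {x // x ∈ Sᶜ}, p k.1 * g k.1 i * h k.1 j
    rw [Finset.sum_coe_sort S (fun k => g k i * (p k * h k j)),
      Finset.sum_coe_sort Sᶜ (fun k => p k * g k i * h k j)]
    rw [← Finset.sum_add_sum_compl S (fun k => p k * (g k i * h k j))]
    congr 1 <;> apply Finset.sum_congr rfl <;> intro k _ <;> ring
  rw [hdecomp]
  refine (matrix_rank_add_le _ _).trans (add_le_add ?_ ?_)
  · exact (Matrix.rank_mul_le_left _ _).trans_eq rfl
  · exact (Matrix.rank_mul_le_right _ _).trans_eq rfl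

end Aux

/-- The generic rank of a linearly parameterized matrix
`M(p) = ∑ k, g k • p k • h k` equals `min_{S ⊆ 𝐪} (rank G_S + rank H_{𝐪∖S})`. -/
theorem stmt7 (n1 n2 q : ℕ) (h1 : 1 ≤ n1) (h2 : 1 ≤ n2) (hq : 1 ≤ q)
    (g : Fin q → Fin n1 → ℝ) (h : Fin q → Fin n2 → ℝ) :
    genericRank g h = ⨅ S : Finset (Fin q), (rankCols g S + rankRows h Sᶜ) := by
  classical
  have hbdd : BddAbove (Set.range fun p : Fin q → ℝ => (paramMat g h p).rank) := by
    refine ⟨n1, ?_⟩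
    rintro x ⟨p, rfl⟩
    exact (paramMat g h p).rank_le_card_height.trans (by simp)
  rw [genericRank]
  apply le_antisymm
  · exact ciSup_le fun p => le_ciInf fun S => rank_paramMat_le g h p S
  · obtain ⟨I, S, _, _, hIg, hIh, hBound⟩ := matInt (Finset.univ : Finset (Fin q)).card
      (rankCols g) (rankRows h)
      (by rw [rankCols_eq_spanRk]; exact spanRk_empty g)
      (by rw [rankRows_eq_spanRk]; exact spanRk_empty h)
      (fun A B hAB => by rw [rankCols_eq_spanRk, rankCols_eq_spanRk]; exact spanRk_mono g hAB)
      (fun A B hAB => by rw [rankRows_eq_spanRk, rankRows_eq_spanRk]; exact spanRk_mono h hAB)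
      (fun A B => by
        simp only [rankCols_eq_spanRk]; exact spanRk_submod g A B)
      (fun A B => by
        simp only [rankRows_eq_spanRk]; exact spanRk_submod h A B)
      (fun e A => by
        simp only [rankCols_eq_spanRk]; exact spanRk_insert_le g e A)
      (fun e A => by
        simp only [rankRows_eq_spanRk]; exact spanRk_insert_le h e A)
      Finset.univ le_rfl
    have key1 : (⨅ S : Finset (Fin q), (rankCols g S + rankRows h Sᶜ))
        ≤ rankCols g S + rankRows h Sᶜ := ciInf_le (OrderBot.bddBelow _) S
    have key2 : rankRows h Sᶜ = rankRows h (Finset.univ \ S) := by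
      rw [Finset.compl_eq_univ_sdiff]
    have key3 := rank_paramMat_indicator g h I hIg hIh
    calc (⨅ S : Finset (Fin q), (rankCols g S + rankRows h Sᶜ))
        ≤ rankCols g S + rankRows h Sᶜ := key1
      _ ≤ I.card := by rw [key2]; exact hBound
      _ = (paramMat g h fun k => if k ∈ I then 1 else 0).rank := key3.symm
      _ ≤ ⨆ p : Fin q → ℝ, (paramMat g h p).rank :=
          le_ciSup hbdd (fun k => if k ∈ I then (1:ℝ) else 0)

end StructCtrl
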